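/- For every fixed positive integer n, lim_{k→∞} p^(k+1)_n / p^(k)_n = ∞; consequently the ratio set of P^T_n = { p^(k)_n : k ≥ 1 } has no accumulation points in (0, ∞), and in particular is not dense in ℝ⁺. -/

import Mathlib

open Filter Topology

/-- `pseq n` is the `n`-th prime number, with `pseq 1 = 2`. -/
noncomputable def pseq (n : ℕ) : ℕ := Nat.nth Nat.Prime (n - 1)

/-- `pk k n = p^(k)_n`: the `k`-fold iterate of `n ↦ p_n` applied to `n`. -/
noncomputable def pk (k n : ℕ) : ℕ := pseq^[k] n

lemma exists_totient_small (ε : ℝ) (hε : 0 < ε) :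
    ∃ a : ℕ, 0 < a ∧ (a.totient : ℝ) ≤ ε * a := by
  have hdiv := (not_summable_iff_tendsto_nat_atTop_of_nonneg
      (f := Set.indicator {p : ℕ | p.Prime} (fun n : ℕ => (1 : ℝ) / n))
      (fun n => Set.indicator_nonneg (fun p _ => by positivity) n)).mp
    not_summable_one_div_on_primes
  obtain ⟨N, hN⟩ := (hdiv.eventually_ge_atTop (-Real.log ε)).exists
  set t := (Finset.range N).filter Nat.Prime with ht
  have htp : ∀ p ∈ t, p.Prime := fun p hp => (Finset.mem_filter.1 hp).2
  have hsum : -Real.log ε ≤ ∑ p ∈ t, (1 : ℝ) / p := by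
    rw [ht, Finset.sum_filter]
    refine hN.trans_eq (Finset.sum_congr rfl fun i _ => ?_)
    simp [Set.indicator_apply]
  set a := ∏ p ∈ t, p with ha
  have hapos : 0 < a := Finset.prod_pos fun p hp => (htp p hp).pos
  refine ⟨a, hapos, ?_⟩
  have hfac : a.primeFactors = t := Nat.primeFactors_prod htp
  have hq : (a.totient : ℚ) = a * ∏ p ∈ t, (1 - (p : ℚ)⁻¹) := by
    rw [Nat.totient_eq_mul_prod_factors, hfac]
  have hr : (a.totient : ℝ) = a * ∏ p ∈ t, (1 - (p : ℝ)⁻¹) := by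
    have := congrArg (fun q : ℚ => (q : ℝ)) hq
    push_cast at this
    exact this
  rw [hr]
  have hprod : ∏ p ∈ t, (1 - (p : ℝ)⁻¹) ≤ ε := by
    have h1 : ∏ p ∈ t, (1 - (p : ℝ)⁻¹) ≤ ∏ p ∈ t, Real.exp (-(p : ℝ)⁻¹) := by
      refine Finset.prod_le_prod (fun p hp => ?_) (fun p hp => ?_)
      · have : (1 : ℝ) ≤ p := by exact_mod_cast (htp p hp).one_lt.le
        have : (p:ℝ)⁻¹ ≤ 1 := inv_le_one_of_one_le₀ this
        linarith
      · linarith [Real.add_one_le_exp (-(p : ℝ)⁻¹)]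
    rw [← Real.exp_sum] at h1
    refine h1.trans ?_
    rw [← Real.exp_log hε]
    apply Real.exp_le_exp.mpr
    have : -Real.log ε ≤ ∑ p ∈ t, ((p : ℝ))⁻¹ := by
      simpa [one_div] using hsum
    simp only [Finset.sum_neg_distrib]
    linarith
  calc (a : ℝ) * ∏ p ∈ t, (1 - (p : ℝ)⁻¹) ≤ (a : ℝ) * ε :=
        mul_le_mul_of_nonneg_left hprod (by positivity)
    _ = ε * a := mul_comm _ _

lemma primeCounting'_linear (ε : ℝ) (hε : 0 < ε) :
    ∀ᶠ N : ℕ in atTop, (N.primeCounting' : ℝ) ≤ ε * N := by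
  obtain ⟨a, hapos, ha⟩ := exists_totient_small (ε/2) (by positivity)
  set k := a + 1 with hk
  have hbound : ∀ N : ℕ, k ≤ N →
      (N.primeCounting' : ℝ) ≤ (k + (ε/2) * a) + (ε/2) * N := by
    intro N hkN
    have hN : k + (N - k) = N := by omega
    have h1 := Nat.primeCounting'_add_le (a := a) (k := k) hapos.ne' (by omega) (N - k)
    rw [hN] at h1
    have h2 : (N.primeCounting' : ℝ) ≤ (k.primeCounting' : ℝ)
        + (a.totient : ℝ) * ((((N - k)/a : ℕ) : ℝ) + 1) := by exact_mod_cast h1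
    have h3 : (k.primeCounting' : ℝ) ≤ k := by
      have : k.primeCounting' ≤ k := by
        rw [Nat.primeCounting']; exact Nat.count_le Nat.Prime
      exact_mod_cast this
    have h4 : (((N - k)/a : ℕ) : ℝ) ≤ ((N - k : ℕ) : ℝ) / a := Nat.cast_div_le
    have h5 : ((N - k : ℕ) : ℝ) ≤ N := by
      have : (N - k : ℕ) ≤ N := Nat.sub_le _ _
      exact_mod_cast this
    have hA : (0:ℝ) < a := by exact_mod_cast hapos
    have ht0 : (0:ℝ) ≤ a.totient := Nat.cast_nonneg _
    have h6 : (a.totient : ℝ) * ((((N - k)/a : ℕ) : ℝ) + 1)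
        ≤ (ε/2) * a * (((N - k : ℕ) : ℝ) / a + 1) := by
      apply mul_le_mul ha (by linarith) (by positivity) (by positivity)
    have h7 : (ε/2) * a * (((N - k : ℕ) : ℝ) / a + 1)
        = (ε/2) * ((N - k : ℕ) : ℝ) + (ε/2) * a := by
      field_simp
    nlinarith [h2, h3, h6, hε]
  have hev1 : ∀ᶠ N : ℕ in atTop, ((k : ℝ) + (ε/2) * a) ≤ (ε/2) * N := by
    have htt : Tendsto (fun N : ℕ => (ε/2) * (N : ℝ)) atTop atTop :=
      (tendsto_natCast_atTop_atTop (R := ℝ)).const_mul_atTop (by positivity)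
    exact htt.eventually_ge_atTop _
  filter_upwards [hev1, eventually_ge_atTop k] with N h1 h2
  have := hbound N h2
  linarith

lemma nth_prime_ge (j : ℕ) : j + 2 ≤ Nat.nth Nat.Prime j := by
  induction j with
  | zero => simp [Nat.nth_prime_zero_eq_two]
  | succ j ih =>
    have h : Nat.nth Nat.Prime j < Nat.nth Nat.Prime (j + 1) :=
      (Nat.nth_lt_nth Nat.infinite_setOf_prime).mpr (by omega)
    omega

lemma pseq_ge (m : ℕ) : m + 1 ≤ pseq m := by
  unfold pseq
  have := nth_prime_ge (m - 1)
  rcases Nat.eq_zero_or_pos m with h | h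
  · subst h; omega
  · omega

lemma pk_succ (k n : ℕ) : pk (k+1) n = pseq (pk k n) := by
  unfold pk; rw [Function.iterate_succ_apply']

lemma pk_ge (k n : ℕ) : k + n ≤ pk k n := by
  induction k with
  | zero => simp [pk]
  | succ k ih =>
    have := pseq_ge (pk k n)
    rw [pk_succ]
    omega

lemma pk_mono (n : ℕ) : Monotone (fun k => pk k n) := by
  have : StrictMono (fun k => pk k n) := by
    apply strictMono_nat_of_lt_succ
    intro k
    have := pseq_ge (pk k n)
    rw [pk_succ]
    omega
  exact this.monotone

lemma pseq_linear_lower (C : ℝ) : ∀ᶠ m : ℕ in atTop, C * m ≤ (pseq m : ℝ) := by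
  set C' : ℝ := max C 1 with hC'def
  have hC' : 0 < C' := lt_of_lt_of_le one_pos (le_max_right _ _)
  obtain ⟨N0, hN0⟩ := eventually_atTop.1 (primeCounting'_linear (1/(2*C')) (by positivity))
  filter_upwards [eventually_ge_atTop (max N0 2)] with m hm
  have hm2 : 2 ≤ m := le_trans (le_max_right _ _) hm
  have hmN : N0 ≤ m := le_trans (le_max_left _ _) hm
  have h1 : N0 ≤ pseq m := le_trans hmN (le_trans (Nat.le_succ m) (pseq_ge m))
  have h2 := hN0 (pseq m) h1
  have h3 : (pseq m).primeCounting' = m - 1 := Nat.primeCounting'_nth_eq (m-1)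
  rw [h3] at h2
  have h4 : ((m - 1 : ℕ) : ℝ) = (m : ℝ) - 1 := by
    have : 1 ≤ m := by omega
    push_cast [Nat.cast_sub this]
    ring
  rw [h4] at h2
  -- h2 : (m:ℝ) - 1 ≤ 1/(2*C') * pseq m
  have hP : (0:ℝ) ≤ (pseq m : ℝ) := Nat.cast_nonneg _
  have hmR : (2:ℝ) ≤ m := by exact_mod_cast hm2
  have hCC' : C ≤ C' := le_max_left _ _
  have key : 2 * C' * ((m:ℝ) - 1) ≤ (pseq m : ℝ) := by
    rw [div_mul_eq_mul_div, le_div_iff₀ (by positivity)] at h2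
    nlinarith [h2]
  have hmnn : (0:ℝ) ≤ (m:ℝ) := by positivity
  nlinarith [key, hC', hmR, hCC', hmnn]

theorem iterated_prime_column_ratio_sparse (n : ℕ) (hn : 1 ≤ n) :
    Tendsto (fun k : ℕ => (pk (k + 1) n : ℝ) / (pk k n : ℝ)) atTop atTop ∧
    (∀ x : ℝ, 0 < x →
      ¬ AccPt x (𝓟 {r : ℝ | ∃ j l : ℕ, 1 ≤ j ∧ 1 ≤ l ∧ r = (pk j n : ℝ) / (pk l n : ℝ)})) ∧
    ¬ (∀ y : ℝ, 0 < y →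
        y ∈ closure {r : ℝ | ∃ j l : ℕ, 1 ≤ j ∧ 1 ≤ l ∧ r = (pk j n : ℝ) / (pk l n : ℝ)}) := by
  set S : Set ℝ := {r : ℝ | ∃ j l : ℕ, 1 ≤ j ∧ 1 ≤ l ∧ r = (pk j n : ℝ) / (pk l n : ℝ)} with hS
  have hpkpos : ∀ k, 0 < pk k n := fun k => lt_of_lt_of_le (by omega) (pk_ge k n)
  have posA : ∀ k, (0:ℝ) < (pk k n : ℝ) := fun k => by exact_mod_cast hpkpos k
  have monoA : ∀ {i j : ℕ}, i ≤ j → (pk i n : ℝ) ≤ (pk j n : ℝ) := by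
    intro i j hij; exact_mod_cast pk_mono n hij
  have jleA : ∀ j : ℕ, (j : ℝ) ≤ (pk j n : ℝ) := by
    intro j
    have : j ≤ pk j n := le_trans (Nat.le_add_right j n) (pk_ge j n)
    exact_mod_cast this
  have htend : Tendsto (fun k : ℕ => (pk (k + 1) n : ℝ) / (pk k n : ℝ)) atTop atTop := by
    rw [tendsto_atTop]
    intro b
    obtain ⟨M, hM⟩ := eventually_atTop.1 (pseq_linear_lower b)
    filter_upwards [eventually_ge_atTop M] with k hk
    have hak : M ≤ pk k n := le_trans hk (le_trans (Nat.le_add_right k n) (pk_ge k n))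
    rw [le_div_iff₀ (posA k), pk_succ]
    exact hM _ hak
  have key : ∀ x : ℝ, 0 < x → ¬ AccPt x (𝓟 S) := by
    intro x hx hacc
    obtain ⟨K0, hK0⟩ := eventually_atTop.1 (tendsto_atTop.1 htend (2*x + 2/x + 1))
    set K : ℕ := K0 + Nat.ceil ((2*x + 2/x) * (pk K0 n : ℝ)) + 1 with hKdef
    have hK0K : K0 ≤ K := by omega
    have hx2 : (0:ℝ) < 2/x := by positivity
    have hclaim : ∀ j l : ℕ, x/2 ≤ (pk j n : ℝ)/(pk l n : ℝ) →
        (pk j n : ℝ)/(pk l n : ℝ) ≤ 2*x →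
        (pk j n : ℝ)/(pk l n : ℝ) = 1 ∨ (j ≤ K ∧ l ≤ K) := by
      intro j l hlow hupp
      have hceil : ((2*x + 2/x) * (pk K0 n : ℝ)) ≤ (K : ℝ) := by
        have h1 : ((2*x + 2/x) * (pk K0 n : ℝ)) ≤ (Nat.ceil ((2*x + 2/x) * (pk K0 n : ℝ)) : ℝ) :=
          Nat.le_ceil _
        have h2 : (Nat.ceil ((2*x + 2/x) * (pk K0 n : ℝ)) : ℕ) ≤ K := by omega
        exact h1.trans (by exact_mod_cast h2)
      rcases lt_trichotomy j l with hjl | hjl | hjl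
      · -- j < l
        right
        have hjK0 : j < K0 := by
          by_contra hcon
          push_neg at hcon
          have h5 := hK0 j hcon
          have h6 : (2*x + 2/x + 1) * (pk j n : ℝ) ≤ (pk (j+1) n : ℝ) := by
            rw [← le_div_iff₀ (posA j)]; exact h5
          have h7 : (pk (j+1) n : ℝ) ≤ (pk l n : ℝ) := monoA hjl
          have h8 : (x/2) * (pk l n : ℝ) ≤ (pk j n : ℝ) := by
            rw [← le_div_iff₀ (posA l)]; exact hlow
          have hxx : (x/2) * (2/x) = 1 := by field_simp
          nlinarith [posA j, posA l, hx]
        constructor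
        · exact le_trans hjK0.le hK0K
        · -- l ≤ K
          have h8 : (x/2) * (pk l n : ℝ) ≤ (pk j n : ℝ) := by
            rw [← le_div_iff₀ (posA l)]; exact hlow
          have h9 : (pk j n : ℝ) ≤ (pk K0 n : ℝ) := monoA hjK0.le
          have hxx : (x/2) * (2/x) = 1 := by field_simp
          have h10 : (l:ℝ) ≤ (2*x + 2/x) * (pk K0 n : ℝ) := by
            have hla := jleA l
            nlinarith [posA l, posA K0, hx]
          have : (l:ℝ) ≤ (K:ℝ) := le_trans h10 hceil
          exact_mod_cast this
      · -- j = l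
        left
        subst hjl
        exact div_self (ne_of_gt (posA j))
      · -- l < j
        right
        have hlK0 : l < K0 := by
          by_contra hcon
          push_neg at hcon
          have h5 := hK0 l hcon
          have h6 : (pk (l+1) n : ℝ)/(pk l n : ℝ) ≤ (pk j n : ℝ)/(pk l n : ℝ) := by
            gcongr
            exact pk_mono n (Nat.succ_le_of_lt hjl)
          linarith
        refine ⟨?_, le_trans hlK0.le hK0K⟩
        have h8 : (pk j n : ℝ) ≤ 2*x * (pk l n : ℝ) := by
          rw [← div_le_iff₀ (posA l)]; exact hupp
        have h9 : (pk l n : ℝ) ≤ (pk K0 n : ℝ) := monoA hlK0.le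
        have h10 : (j:ℝ) ≤ (2*x + 2/x) * (pk K0 n : ℝ) := by
          have hja := jleA j
          nlinarith [posA l, posA K0, hx]
        have : (j:ℝ) ≤ (K:ℝ) := le_trans h10 hceil
        exact_mod_cast this
    -- finiteness of S on the interval
    have hfin : (S ∩ Set.Icc (x/2) (2*x)).Finite := by
      have hsub : S ∩ Set.Icc (x/2) (2*x) ⊆
          insert (1:ℝ) ((fun p : ℕ × ℕ => (pk p.1 n : ℝ)/(pk p.2 n : ℝ)) ''
            (Set.Iic K ×ˢ Set.Iic K)) := by
        rintro r ⟨⟨j, l, hj, hl, rfl⟩, hr1, hr2⟩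
        rcases hclaim j l hr1 hr2 with h | ⟨h1, h2⟩
        · exact Set.mem_insert_iff.2 (Or.inl h)
        · exact Set.mem_insert_iff.2 (Or.inr ⟨(j, l), ⟨h1, h2⟩, rfl⟩)
      exact Set.Finite.subset
        ((((Set.finite_Iic K).prod (Set.finite_Iic K)).image _).insert 1) hsub
    set F : Set ℝ := (S ∩ Set.Icc (x/2) (2*x)) \ {x} with hF
    have hFfin : F.Finite := hfin.diff
    have hFclosed : IsClosed F := hFfin.isClosed
    set U : Set ℝ := Fᶜ ∩ Set.Ioo (x/2) (2*x) with hU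
    have hUopen : IsOpen U := hFclosed.isOpen_compl.inter isOpen_Ioo
    have hxU : x ∈ U := by
      constructor
      · simp [hF]
      · exact ⟨by linarith, by linarith⟩
    obtain ⟨y, ⟨hyU, hyS⟩, hyx⟩ := (accPt_iff_nhds (x := x) (C := S)).1 hacc U (hUopen.mem_nhds hxU)
    have hyF : y ∈ F := by
      refine ⟨⟨hyS, ?_, ?_⟩, ?_⟩
      · exact hyU.2.1.le
      · exact hyU.2.2.le
      · simpa using hyx
    exact hyU.1 hyF
  refine ⟨htend, key, ?_⟩
  intro h
  have hsq : (0:ℝ) < Real.sqrt 2 := Real.sqrt_pos.2 (by norm_num)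
  have h2 := h (Real.sqrt 2) hsq
  have hnotS : Real.sqrt 2 ∉ S := by
    rintro ⟨j, l, hj, hl, hrat⟩
    exact irrational_sqrt_two ⟨(pk j n : ℚ)/(pk l n : ℚ), by push_cast; exact hrat.symm⟩
  have hcl := mem_closure_iff_clusterPt.1 h2
  have hacc : AccPt (Real.sqrt 2) (𝓟 S) := by
    rw [accPt_principal_iff_clusterPt, Set.diff_singleton_eq_self hnotS]
    exact hcl
  exact key _ hsq hacc
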